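/- Let 1 < p < ∞. There exists a constant C(p) > 0, depending only on p, such that for every finite-dimensional real inner product space X and all z, w ∈ X one has |V_p(z + w)| ≤ C(p)·(|V_p(z)| + |V_p(w)|). -/

import Mathlib

open MeasureTheory Metric Filter Topology

/-- The `V`-function `V_p(z) = (1+|z|^2)^{(p-2)/4} z`. -/
noncomputable def Vp (p : ℝ) {X : Type*} [NormedAddCommGroup X] [NormedSpace ℝ X] (z : X) : X :=
  ((1 + ‖z‖ ^ 2) ^ ((p - 2) / 4)) • z

lemma norm_Vp (p : ℝ) {X : Type*} [NormedAddCommGroup X] [NormedSpace ℝ X] (z : X) :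
    ‖Vp p z‖ = (1 + ‖z‖ ^ 2) ^ ((p - 2) / 4) * ‖z‖ := by
  rw [Vp, norm_smul, Real.norm_eq_abs,
    abs_of_pos (Real.rpow_pos_of_pos (by positivity) _)]

/-- Monotonicity of `t ↦ t (1+t^2)^α` on `[0,∞)` for `α ≥ -1/2`. -/
lemma f_mono {α : ℝ} (hα : -(1/2) ≤ α) {t s : ℝ} (ht : 0 ≤ t) (hts : t ≤ s) :
    t * (1 + t ^ 2) ^ α ≤ s * (1 + s ^ 2) ^ α := by
  have hs : 0 ≤ s := ht.trans hts
  rcases le_or_gt 0 α with h | h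
  · exact mul_le_mul hts (Real.rpow_le_rpow (by positivity) (by nlinarith) h)
      (by positivity) hs
  · rcases eq_or_lt_of_le ht with rfl | ht0
    · simpa using mul_nonneg hs (Real.rpow_nonneg (by positivity) _)
    · set γ := -α with hγ
      have hγ0 : 0 < γ := by simp only [hγ]; linarith
      have hγ1 : 2 * γ ≤ 1 := by simp only [hγ]; linarith
      have hA : (0:ℝ) < 1 + t ^ 2 := by positivity
      have hB : (0:ℝ) < 1 + s ^ 2 := by positivity
      have hst1 : (1:ℝ) ≤ s / t := (one_le_div ht0).2 hts
      have key : t * (1 + s ^ 2) ^ γ ≤ s * (1 + t ^ 2) ^ γ := by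
        have h1 : (1 + s ^ 2) ≤ (1 + t ^ 2) * (s / t) ^ 2 := by
          rw [div_pow, ← mul_div_assoc, le_div_iff₀ (by positivity)]
          nlinarith [mul_self_le_mul_self ht hts]
        have h2 : (1 + s ^ 2) ^ γ ≤ (1 + t ^ 2) ^ γ * ((s / t) ^ 2) ^ γ := by
          rw [← Real.mul_rpow hA.le (by positivity)]
          exact Real.rpow_le_rpow hB.le h1 hγ0.le
        have h3 : ((s / t) ^ 2 : ℝ) ^ γ ≤ s / t := by
          rw [← Real.rpow_natCast (s / t) 2, ← Real.rpow_mul (by positivity)]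
          calc (s / t) ^ ((2:ℕ) * γ) ≤ (s / t) ^ (1:ℝ) :=
                Real.rpow_le_rpow_of_exponent_le hst1 (by push_cast; linarith)
            _ = s / t := Real.rpow_one _
        calc t * (1 + s ^ 2) ^ γ
            ≤ t * ((1 + t ^ 2) ^ γ * ((s / t) ^ 2) ^ γ) :=
              mul_le_mul_of_nonneg_left h2 ht
          _ ≤ t * ((1 + t ^ 2) ^ γ * (s / t)) :=
              mul_le_mul_of_nonneg_left
                (mul_le_mul_of_nonneg_left h3 (Real.rpow_nonneg hA.le _)) ht
          _ = s * (1 + t ^ 2) ^ γ := by field_simp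
      have hrw : ∀ x : ℝ, 0 < x → x ^ α = (x ^ γ)⁻¹ := fun x hx => by
        rw [show α = -γ by simp [hγ], Real.rpow_neg hx.le]
      rw [hrw _ hA, hrw _ hB, ← div_eq_mul_inv, ← div_eq_mul_inv,
        div_le_div_iff₀ (Real.rpow_pos_of_pos hA _) (Real.rpow_pos_of_pos hB _)]
      exact key

/-- Lemma 2.2(b): for `1 < p < ∞` there is a constant `C(p) > 0`, depending only on `p`
(uniform in the finite-dimensional real inner product space `X`), such that
`|V_p(z+w)| ≤ C(p)(|V_p(z)| + |V_p(w)|)` for all `z, w ∈ X`. -/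
theorem Vp_add.{u} (p : ℝ) (hp : 1 < p) :
    ∃ C : ℝ, 0 < C ∧
      ∀ (X : Type u) [NormedAddCommGroup X] [InnerProductSpace ℝ X] [FiniteDimensional ℝ X],
        ∀ z w : X, ‖Vp p (z + w)‖ ≤ C * (‖Vp p z‖ + ‖Vp p w‖) := by
  set α := (p - 2) / 4 with hαdef
  have hα : -(1/2) ≤ α := by simp only [hαdef]; linarith
  refine ⟨2 * max 1 ((4:ℝ) ^ α), by positivity, fun X _ _ _ z w => ?_⟩
  set a := max ‖z‖ ‖w‖ with ha
  have ha0 : 0 ≤ a := le_trans (norm_nonneg z) (le_max_left _ _)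
  have hzw : ‖z + w‖ ≤ 2 * a :=
    (norm_add_le z w).trans (by
      have := le_max_left ‖z‖ ‖w‖
      have := le_max_right ‖z‖ ‖w‖
      linarith)
  have hfa_nonneg : ∀ u : X, 0 ≤ (1 + ‖u‖ ^ 2) ^ α * ‖u‖ := fun u =>
    mul_nonneg (Real.rpow_nonneg (by positivity) _) (norm_nonneg u)
  have hfa : a * (1 + a ^ 2) ^ α ≤ (1 + ‖z‖ ^ 2) ^ α * ‖z‖ + (1 + ‖w‖ ^ 2) ^ α * ‖w‖ := by
    rcases max_cases ‖z‖ ‖w‖ with ⟨h1, _⟩ | ⟨h1, _⟩ <;> rw [ha, h1]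
    · nlinarith [hfa_nonneg w]
    · nlinarith [hfa_nonneg z]
  have hmid : (1 + (2 * a) ^ 2) ^ α ≤ max 1 ((4:ℝ) ^ α) * (1 + a ^ 2) ^ α := by
    rcases le_or_gt 0 α with h | h
    · calc (1 + (2 * a) ^ 2) ^ α ≤ (4 * (1 + a ^ 2)) ^ α :=
            Real.rpow_le_rpow (by positivity) (by nlinarith) h
        _ = (4:ℝ) ^ α * (1 + a ^ 2) ^ α := Real.mul_rpow (by norm_num) (by positivity)
        _ ≤ max 1 ((4:ℝ) ^ α) * (1 + a ^ 2) ^ α :=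
            mul_le_mul_of_nonneg_right (le_max_right _ _) (Real.rpow_nonneg (by positivity) _)
    · calc (1 + (2 * a) ^ 2) ^ α ≤ (1 + a ^ 2) ^ α :=
            Real.rpow_le_rpow_of_nonpos (by positivity) (by nlinarith) h.le
        _ ≤ max 1 ((4:ℝ) ^ α) * (1 + a ^ 2) ^ α := by
            nlinarith [Real.rpow_nonneg (show (0:ℝ) ≤ 1 + a ^ 2 by positivity) α,
              le_max_left (1:ℝ) ((4:ℝ) ^ α)]
  rw [norm_Vp, norm_Vp, norm_Vp]
  calc (1 + ‖z + w‖ ^ 2) ^ α * ‖z + w‖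
      = ‖z + w‖ * (1 + ‖z + w‖ ^ 2) ^ α := mul_comm _ _
    _ ≤ (2 * a) * (1 + (2 * a) ^ 2) ^ α := f_mono hα (norm_nonneg _) hzw
    _ ≤ (2 * a) * (max 1 ((4:ℝ) ^ α) * (1 + a ^ 2) ^ α) :=
        mul_le_mul_of_nonneg_left hmid (by positivity)
    _ = 2 * max 1 ((4:ℝ) ^ α) * (a * (1 + a ^ 2) ^ α) := by ring
    _ ≤ 2 * max 1 ((4:ℝ) ^ α) * ((1 + ‖z‖ ^ 2) ^ α * ‖z‖ + (1 + ‖w‖ ^ 2) ^ α * ‖w‖) :=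
        mul_le_mul_of_nonneg_left hfa (by positivity)
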